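/- Let ρ be a unitary representation of the finitary symmetric group S∞ of ℕ on a complex Hilbert space H, let H[α] denote the closed subspace of vectors fixed by ρ(g) for all g ∈ S∞[α], and assume that ⋃_α H[α] is dense in H. Let P[β] be the orthogonal projection of H onto H[β]. Then for every β ∈ ℕ and all v, w ∈ H, the sequence ⟨ρ(θ_j[β])v, w⟩ converges, as j → ∞, to ⟨P[β]v, w⟩; that is, the operators ρ(θ_j[β]) converge weakly to the projection P[β]. -/

import Mathlib

open scoped InnerProductSpace

/-- The finitary symmetric group of a countable set: permutations with finite support. -/
def finitarySymm (Ω : Type*) : Subgroup (Equiv.Perm Ω) where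
  carrier := {g | {x | g x ≠ x}.Finite}
  one_mem' := by simp
  mul_mem' := by
    intro a b ha hb
    refine Set.Finite.subset (ha.union hb) fun x hx => ?_
    simp only [Set.mem_setOf_eq, Equiv.Perm.mul_apply] at hx
    simp only [Set.mem_union, Set.mem_setOf_eq]
    by_cases h : b x = x
    · exact Or.inl (by simpa [h] using hx)
    · exact Or.inr h
  inv_mem' := by
    intro a ha
    refine Set.Finite.subset ha fun x hx => ?_
    simp only [Set.mem_setOf_eq] at hx ⊢
    intro h
    apply hx
    nth_rewrite 1 [← h]
    simp

/-- `S∞`, the finitary symmetric group of `ℕ`. -/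
abbrev SInf := ↥(finitarySymm ℕ)

/-- Membership in the subgroup `S∞[α]`: finitary permutations fixing every `x < α`. -/
def InSInf (α : ℕ) (g : SInf) : Prop := ∀ x < α, (g : Equiv.Perm ℕ) x = x

/-- The permutation exchanging the blocks `[β, β+j)` and `[β+j, β+2j)`. -/
def thetaFun (β j : ℕ) (x : ℕ) : ℕ :=
  if β ≤ x ∧ x < β + j then x + j
  else if β + j ≤ x ∧ x < β + 2 * j then x - j
  else x

lemma thetaFun_involutive (β j : ℕ) : Function.Involutive (thetaFun β j) := by
  intro x
  unfold thetaFun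
  split_ifs <;> omega

/-- `θ_j[β]` as a permutation of `ℕ`. -/
def thetaPerm (β j : ℕ) : Equiv.Perm ℕ :=
  Function.Involutive.toPerm _ (thetaFun_involutive β j)

lemma thetaPerm_finitary (β j : ℕ) : thetaPerm β j ∈ finitarySymm ℕ := by
  refine Set.Finite.subset (Set.finite_Iio (β + 2 * j)) fun x hx => ?_
  simp only [Set.mem_setOf_eq, thetaPerm, Function.Involutive.coe_toPerm, thetaFun] at hx
  simp only [Set.mem_Iio]
  by_contra h
  apply hx
  split_ifs <;> omega

/-- `θ_j[β]` as an element of `S∞`. -/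
def thetaEl (β j : ℕ) : SInf := ⟨thetaPerm β j, thetaPerm_finitary β j⟩

/-- The subspace `H[α]` of vectors fixed by all operators `ρ(g)`, `g ∈ S∞[α]`. -/
def fixedSet {H : Type*} [NormedAddCommGroup H] [InnerProductSpace ℂ H] [CompleteSpace H]
    (ρ : SInf →* unitary (H →L[ℂ] H)) (α : ℕ) : Set H :=
  {v | ∀ g : SInf, InSInf α g → (ρ g : H →L[ℂ] H) v = v}

/-- `P` is the orthogonal projection of `H` onto `H[δ]`: it takes values in `H[δ]` and
`v - P v` is orthogonal to `H[δ]`. -/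
def IsProjOntoFixed {H : Type*} [NormedAddCommGroup H] [InnerProductSpace ℂ H]
    [CompleteSpace H] (ρ : SInf →* unitary (H →L[ℂ] H)) (δ : ℕ) (P : H →L[ℂ] H) : Prop :=
  ∀ v : H, P v ∈ fixedSet ρ δ ∧ ∀ w ∈ fixedSet ρ δ, ⟪v - P v, w⟫_ℂ = 0

section Aux

variable {H : Type*} [NormedAddCommGroup H] [InnerProductSpace ℂ H] [CompleteSpace H]
  (ρ : SInf →* unitary (H →L[ℂ] H))

lemma rho_inner (g : SInf) (x y : H) :
    ⟪(ρ g : H →L[ℂ] H) x, (ρ g : H →L[ℂ] H) y⟫_ℂ = ⟪x, y⟫_ℂ := by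
  have h1 : star (ρ g : H →L[ℂ] H) * (ρ g : H →L[ℂ] H) = 1 := (Unitary.mem_iff.mp (ρ g).2).1
  have h2 := ContinuousLinearMap.adjoint_inner_left (𝕜 := ℂ) (ρ g : H →L[ℂ] H)
    y ((ρ g : H →L[ℂ] H) x)
  rw [← ContinuousLinearMap.star_eq_adjoint] at h2
  calc ⟪(ρ g : H →L[ℂ] H) x, (ρ g : H →L[ℂ] H) y⟫_ℂ
      = ⟪(star (ρ g : H →L[ℂ] H) * (ρ g : H →L[ℂ] H)) x, y⟫_ℂ := by
        rw [ContinuousLinearMap.mul_apply]; exact h2.symm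
    _ = ⟪x, y⟫_ℂ := by rw [h1]; rfl

lemma rho_norm (g : SInf) (x : H) : ‖(ρ g : H →L[ℂ] H) x‖ = ‖x‖ := by
  have := rho_inner ρ g x x
  have h2 : ‖(ρ g : H →L[ℂ] H) x‖ ^ 2 = ‖x‖ ^ 2 := by
    rw [← @inner_self_eq_norm_sq ℂ, ← @inner_self_eq_norm_sq ℂ, this]
  nlinarith [norm_nonneg ((ρ g : H →L[ℂ] H) x), norm_nonneg x]

lemma rho_mul_apply (g h : SInf) (x : H) :
    (ρ (g * h) : H →L[ℂ] H) x = (ρ g : H →L[ℂ] H) ((ρ h : H →L[ℂ] H) x) := by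
  rw [map_mul]
  rfl

lemma rho_inv_apply (g : SInf) (x : H) :
    (ρ g⁻¹ : H →L[ℂ] H) ((ρ g : H →L[ℂ] H) x) = x := by
  rw [← rho_mul_apply, inv_mul_cancel, map_one]
  rfl

lemma rho_fixed_inner_left (g : SInf) (x w : H) (hw : (ρ g : H →L[ℂ] H) w = w) :
    ⟪(ρ g : H →L[ℂ] H) x, w⟫_ℂ = ⟪x, w⟫_ℂ := by
  have hw' : (ρ g⁻¹ : H →L[ℂ] H) w = w := by
    conv_lhs => rw [← hw, rho_inv_apply]
  have h3 : (ρ g : H →L[ℂ] H) ((ρ g⁻¹ : H →L[ℂ] H) w) = w := by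
    rw [← rho_mul_apply, mul_inv_cancel, map_one]; rfl
  calc ⟪(ρ g : H →L[ℂ] H) x, w⟫_ℂ = ⟪(ρ g : H →L[ℂ] H) x,
        (ρ g : H →L[ℂ] H) ((ρ g⁻¹ : H →L[ℂ] H) w)⟫_ℂ := by rw [h3]
    _ = ⟪x, (ρ g⁻¹ : H →L[ℂ] H) w⟫_ℂ := rho_inner ρ g _ _
    _ = ⟪x, w⟫_ℂ := by rw [hw']

lemma theta_mul_self (β j : ℕ) : thetaEl β j * thetaEl β j = 1 := by
  apply Subtype.ext
  apply Equiv.ext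
  intro x
  exact thetaFun_involutive β j x

lemma rho_theta_theta (β j : ℕ) (x : H) :
    (ρ (thetaEl β j) : H →L[ℂ] H) ((ρ (thetaEl β j) : H →L[ℂ] H) x) = x := by
  rw [← rho_mul_apply, theta_mul_self, map_one]
  rfl

lemma theta_inner_swap (β j : ℕ) (x y : H) :
    ⟪(ρ (thetaEl β j) : H →L[ℂ] H) x, y⟫_ℂ = ⟪x, (ρ (thetaEl β j) : H →L[ℂ] H) y⟫_ℂ := by
  conv_lhs => rw [← rho_theta_theta ρ β j y]
  rw [rho_inner]

lemma InSInf_theta (β j : ℕ) : InSInf β (thetaEl β j) := by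
  intro x hx
  show thetaFun β j x = x
  unfold thetaFun
  split_ifs <;> omega

lemma fixedSet_mono {α α' : ℕ} (hαα' : α ≤ α') : fixedSet ρ α ⊆ fixedSet ρ α' := by
  intro v hv g hg
  exact hv g fun x hx => hg x (lt_of_lt_of_le hx hαα')

lemma fixedSet_sub {α : ℕ} {v w : H} (hv : v ∈ fixedSet ρ α) (hw : w ∈ fixedSet ρ α) :
    v - w ∈ fixedSet ρ α := by
  intro g hg
  rw [map_sub, hv g hg, hw g hg]

end Aux

section Key

variable {H : Type*} [NormedAddCommGroup H] [InnerProductSpace ℂ H] [CompleteSpace H]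
  (ρ : SInf →* unitary (H →L[ℂ] H))

lemma key_lemma (β δ M l : ℕ) (hβδ : β ≤ δ) (hδM : δ ≤ M) (hMl : M ≤ l)
    (h : SInf) (hfix : ∀ x, x < β → (h : Equiv.Perm ℕ) x = x)
    (hout : ∀ x, β ≤ x → x < δ → δ ≤ (h : Equiv.Perm ℕ) x)
    (hsupp : ∀ x, M ≤ x → (h : Equiv.Perm ℕ) x = x)
    (v w : H) (hv : v ∈ fixedSet ρ δ) (hw : w ∈ fixedSet ρ δ) :
    ⟪(ρ h : H →L[ℂ] H) v, w⟫_ℂ = ⟪(ρ (thetaEl β l) : H →L[ℂ] H) v, w⟫_ℂ := by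
  set hp : Equiv.Perm ℕ := (h : Equiv.Perm ℕ) with hhp
  have hbound : ∀ x, x < M → hp x < M := by
    intro x hx
    by_contra hc
    push_neg at hc
    have := hsupp (hp x) hc
    have := hp.injective this
    omega
  -- the correcting permutation σ
  set σf : ℕ → ℕ := fun y =>
    if β + l ≤ y ∧ y < δ + l then hp (y - l)
    else if β ≤ hp.symm y ∧ hp.symm y < δ then hp.symm y + l
    else y with hσf
  have hσinv : Function.Involutive σf := by
    intro y
    by_cases c1 : β + l ≤ y ∧ y < δ + l
    · have hx1 : β ≤ y - l := by omega
      have hx2 : y - l < δ := by omega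
      have hltM : hp (y - l) < M := hbound _ (by omega)
      have hge : δ ≤ hp (y - l) := hout _ hx1 hx2
      have e1 : σf y = hp (y - l) := by simp only [hσf]; rw [if_pos c1]
      rw [e1]
      simp only [hσf, Equiv.symm_apply_apply]
      have nc1 : ¬(β + l ≤ hp (y - l) ∧ hp (y - l) < δ + l) := by omega
      rw [if_neg nc1, if_pos ⟨hx1, hx2⟩]
      omega
    · by_cases c2 : β ≤ hp.symm y ∧ hp.symm y < δ
      · have e1 : σf y = hp.symm y + l := by simp only [hσf]; rw [if_neg c1, if_pos c2]
        rw [e1]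
        simp only [hσf]
        have : β + l ≤ hp.symm y + l ∧ hp.symm y + l < δ + l := by omega
        rw [if_pos this]
        simp only [Nat.add_sub_cancel, Equiv.apply_symm_apply]
      · have e1 : σf y = y := by simp only [hσf]; rw [if_neg c1, if_neg c2]
        rw [e1]
        simp only [hσf]
        rw [if_neg c1, if_neg c2]
  set σp : Equiv.Perm ℕ := Function.Involutive.toPerm σf hσinv with hσp
  have hσapp : ∀ y, σp y = σf y := fun y => rfl
  have hσfixlow : ∀ y, y < δ → σf y = y := by
    intro y hy
    have c1 : ¬(β + l ≤ y ∧ y < δ + l) := by omega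
    simp only [hσf]
    rw [if_neg c1]
    by_cases c2 : β ≤ hp.symm y ∧ hp.symm y < δ
    · exfalso
      have := hout _ c2.1 c2.2
      rw [Equiv.apply_symm_apply] at this
      omega
    · rw [if_neg c2]
  have hσfin : {x | σp x ≠ x}.Finite := by
    refine Set.Finite.subset (Set.finite_Iio (δ + l)) fun y hy => ?_
    simp only [Set.mem_setOf_eq, hσapp] at hy
    simp only [Set.mem_Iio]
    by_contra hc
    push_neg at hc
    apply hy
    have c1 : ¬(β + l ≤ y ∧ y < δ + l) := by omega
    have hsy : hp.symm y = y := by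
      have := hsupp y (by omega)
      conv_lhs => rw [← this]
      exact hp.symm_apply_apply y
    have c2 : ¬(β ≤ hp.symm y ∧ hp.symm y < δ) := by rw [hsy]; omega
    simp only [hσf]
    rw [if_neg c1, if_neg c2]
  set σ : SInf := ⟨σp, hσfin⟩ with hσ
  have hσσ : σ * σ = 1 := by
    apply Subtype.ext; apply Equiv.ext; intro x; exact hσinv x
  have hθθ : thetaEl β l * thetaEl β l = 1 := theta_mul_self β l
  set τ : SInf := thetaEl β l * σ * h with hτ
  have hdecomp : h = σ * thetaEl β l * τ := by
    rw [hτ]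
    have : σ * thetaEl β l * (thetaEl β l * σ * h)
        = (σ * (thetaEl β l * thetaEl β l)) * (σ * h) := by group
    rw [this, hθθ, mul_one, ← mul_assoc, hσσ, one_mul]
  -- τ fixes [0, δ)
  have hτfix : InSInf δ τ := by
    intro x hx
    have happ : (τ : Equiv.Perm ℕ) x = (thetaPerm β l) (σp (hp x)) := rfl
    rw [happ]
    by_cases hxβ : x < β
    · rw [hfix x hxβ]
      rw [hσapp, hσfixlow x hx]
      show thetaFun β l x = x
      unfold thetaFun
      split_ifs <;> omega
    · push_neg at hxβ
      have hy1 : δ ≤ hp x := hout x hxβ hx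
      have hy2 : hp x < M := hbound x (by omega)
      have c1 : ¬(β + l ≤ hp x ∧ hp x < δ + l) := by omega
      have c2 : β ≤ hp.symm (hp x) ∧ hp.symm (hp x) < δ := by
        simp only [Equiv.symm_apply_apply]; omega
      have e1 : σp (hp x) = x + l := by
        rw [hσapp]
        simp only [hσf]
        rw [if_neg c1, if_pos c2, Equiv.symm_apply_apply]
      rw [e1]
      show thetaFun β l (x + l) = x
      unfold thetaFun
      split_ifs <;> omega
  have hσInS : InSInf δ σ := fun y hy => by
    rw [show (σ : Equiv.Perm ℕ) y = σf y from rfl]; exact hσfixlow y hy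
  -- conclude
  rw [hdecomp, rho_mul_apply, rho_mul_apply, hv τ hτfix]
  exact rho_fixed_inner_left ρ σ _ w (hw σ hσInS)

lemma constF (β δ : ℕ) (hβδ : β ≤ δ) (v w : H) (hv : v ∈ fixedSet ρ δ)
    (hw : w ∈ fixedSet ρ δ) (j k : ℕ) (hj : δ - β ≤ j) (hk : δ - β ≤ k) :
    ⟪(ρ (thetaEl β j) : H →L[ℂ] H) v, w⟫_ℂ = ⟪(ρ (thetaEl β k) : H →L[ℂ] H) v, w⟫_ℂ := by
  set l : ℕ := max (β + 2 * j + δ) (β + 2 * k + δ) with hl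
  have key_j : ∀ i : ℕ, δ - β ≤ i → β + 2 * i + δ ≤ l →
      ⟪(ρ (thetaEl β i) : H →L[ℂ] H) v, w⟫_ℂ = ⟪(ρ (thetaEl β l) : H →L[ℂ] H) v, w⟫_ℂ := by
    intro i hi hil
    refine key_lemma ρ β δ (β + 2 * i + δ) l hβδ (by omega) hil (thetaEl β i) ?_ ?_ ?_ v w hv hw
    · intro x hx
      show thetaFun β i x = x
      unfold thetaFun; split_ifs <;> omega
    · intro x hx1 hx2
      show δ ≤ thetaFun β i x
      unfold thetaFun; split_ifs <;> omega
    · intro x hx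
      show thetaFun β i x = x
      unfold thetaFun; split_ifs <;> omega
  rw [key_j j hj (le_max_left _ _), key_j k hk (le_max_right _ _)]

end Key

section Core

variable {H : Type*} [NormedAddCommGroup H] [InnerProductSpace ℂ H] [CompleteSpace H]
  (ρ : SInf →* unitary (H →L[ℂ] H))

lemma core_lemma (β δ : ℕ) (hβδ : β ≤ δ) (u w : H) (hu : u ∈ fixedSet ρ δ)
    (huo : ∀ y ∈ fixedSet ρ β, ⟪u, y⟫_ℂ = 0) (hw : w ∈ fixedSet ρ δ) :
    ∀ j, δ - β ≤ j → ⟪(ρ (thetaEl β j) : H →L[ℂ] H) u, w⟫_ℂ = 0 := by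
  set m : ℕ := δ - β with hm
  have hδm : δ = β + m := by omega
  set jn : ℕ → ℕ := fun n => (n + 1) * (m + 1) with hjn
  have hjn_ge : ∀ n, m ≤ jn n := by
    intro n
    calc m ≤ m + 1 := by omega
      _ ≤ (n+1) * (m+1) := Nat.le_mul_of_pos_left _ (by omega)
  have hjn_gt : ∀ n, n < jn n := by
    intro n
    calc n < n + 1 := by omega
      _ ≤ (n+1) * (m+1) := Nat.le_mul_of_pos_right _ (by omega)
  have hjn_sep : ∀ a b : ℕ, a < b → jn a + (m + 1) ≤ jn b := by
    intro a b hab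
    calc jn a + (m+1) = (a + 2) * (m+1) := by ring
      _ ≤ (b+1) * (m+1) := Nat.mul_le_mul_right _ (by omega)
  set z : ℕ → H := fun n => (ρ (thetaEl β (jn n)) : H →L[ℂ] H) w with hz
  set c : ℂ := ⟪(ρ (thetaEl β m) : H →L[ℂ] H) u, w⟫_ℂ with hc
  set c' : ℂ := ⟪(ρ (thetaEl β m) : H →L[ℂ] H) w, w⟫_ℂ with hc'
  set X : ℂ := ⟪w, w⟫_ℂ - c' with hX
  -- ⟪u, z n⟫ = c
  have hz_inner_u : ∀ n, ⟪u, z n⟫_ℂ = c := by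
    intro n
    rw [hz]
    rw [← theta_inner_swap]
    exact constF ρ β δ hβδ u w hu hw (jn n) m (hjn_ge n) le_rfl
  -- Gram matrix
  have gram : ∀ a b : ℕ, a ≠ b → ⟪z a, z b⟫_ℂ = c' := by
    intro a b hab
    set h : SInf := thetaEl β (jn b) * thetaEl β (jn a) with hh
    have step1 : ⟪z a, z b⟫_ℂ = ⟪(ρ h : H →L[ℂ] H) w, w⟫_ℂ := by
      have e1 : (ρ (thetaEl β (jn b)) : H →L[ℂ] H) ((ρ h : H →L[ℂ] H) w)
          = (ρ (thetaEl β (jn a)) : H →L[ℂ] H) w := by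
        rw [hh, ← rho_mul_apply, ← mul_assoc, theta_mul_self, one_mul]
      calc ⟪z a, z b⟫_ℂ = ⟪(ρ (thetaEl β (jn b)) : H →L[ℂ] H) ((ρ h : H →L[ℂ] H) w),
            (ρ (thetaEl β (jn b)) : H →L[ℂ] H) w⟫_ℂ := by rw [e1]
        _ = ⟪(ρ h : H →L[ℂ] H) w, w⟫_ℂ := rho_inner ρ _ _ _
    have hsep : jn a + (m+1) ≤ jn b ∨ jn b + (m+1) ≤ jn a := by
      rcases Nat.lt_or_ge a b with hab' | hab'
      · exact Or.inl (hjn_sep a b hab')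
      · exact Or.inr (hjn_sep b a (by omega))
    have hja := hjn_ge a
    have hjb := hjn_ge b
    have happ : ∀ x, (h : Equiv.Perm ℕ) x = thetaFun β (jn b) (thetaFun β (jn a) x) :=
      fun x => rfl
    have step2 : ⟪(ρ h : H →L[ℂ] H) w, w⟫_ℂ
        = ⟪(ρ (thetaEl β (β + 2 * jn a + 2 * jn b + δ)) : H →L[ℂ] H) w, w⟫_ℂ := by
      refine key_lemma ρ β δ (β + 2 * jn a + 2 * jn b + δ) (β + 2 * jn a + 2 * jn b + δ)
        hβδ (by omega) le_rfl h ?_ ?_ ?_ w w hw hw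
      · intro x hx
        rw [happ]
        unfold thetaFun
        split_ifs <;> omega
      · intro x hx1 hx2
        rw [happ]
        unfold thetaFun
        split_ifs <;> omega
      · intro x hx
        rw [happ]
        unfold thetaFun
        split_ifs <;> omega
    rw [step1, step2]
    exact constF ρ β δ hβδ w w hw hw _ m (by omega) le_rfl
  -- entries
  have hzz : ∀ n n', ⟪z n, z n'⟫_ℂ = c' + (if n = n' then X else 0) := by
    intro n n'
    by_cases hnn : n = n'
    · subst hnn
      rw [if_pos rfl, hz]
      rw [rho_inner, hX]; ring
    · rw [if_neg hnn, add_zero]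
      exact gram n n' hnn
  -- double sums
  have hSS : ∀ N₁ N₂ : ℕ, ⟪∑ n ∈ Finset.range N₁, z n, ∑ n ∈ Finset.range N₂, z n⟫_ℂ
      = (N₁ : ℂ) * (N₂ : ℂ) * c' + ((min N₁ N₂ : ℕ) : ℂ) * X := by
    intro N₁ N₂
    rw [sum_inner]
    have hrow : ∀ n, ⟪z n, ∑ n' ∈ Finset.range N₂, z n'⟫_ℂ
        = (N₂ : ℂ) * c' + (if n < N₂ then X else 0) := by
      intro n
      rw [inner_sum]
      calc ∑ n' ∈ Finset.range N₂, ⟪z n, z n'⟫_ℂ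
          = ∑ n' ∈ Finset.range N₂, (c' + if n = n' then X else 0) :=
            Finset.sum_congr rfl (fun n' _ => hzz n n')
        _ = (N₂ : ℂ) * c' + (if n < N₂ then X else 0) := by
            rw [Finset.sum_add_distrib, Finset.sum_const, Finset.card_range,
              Finset.sum_ite_eq]
            simp [Finset.mem_range, nsmul_eq_mul]
    calc ∑ n ∈ Finset.range N₁, ⟪z n, ∑ n' ∈ Finset.range N₂, z n'⟫_ℂ
        = ∑ n ∈ Finset.range N₁, ((N₂ : ℂ) * c' + (if n < N₂ then X else 0)) :=
          Finset.sum_congr rfl (fun n _ => hrow n)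
      _ = (N₁ : ℂ) * (N₂ : ℂ) * c' + ((min N₁ N₂ : ℕ) : ℂ) * X := by
          rw [Finset.sum_add_distrib, Finset.sum_const, Finset.card_range]
          have hfilt : ∑ n ∈ Finset.range N₁, (if n < N₂ then X else 0)
              = ((min N₁ N₂ : ℕ) : ℂ) * X := by
            rw [← Finset.sum_filter]
            have : (Finset.range N₁).filter (fun n => n < N₂) = Finset.range (min N₁ N₂) := by
              ext n
              simp only [Finset.mem_filter, Finset.mem_range, Nat.lt_min]
            rw [this, Finset.sum_const, Finset.card_range, nsmul_eq_mul]
          rw [hfilt, nsmul_eq_mul]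
          ring
  set A : ℕ → H := fun N => ((N : ℂ))⁻¹ • ∑ n ∈ Finset.range N, z n with hA
  have hAA : ∀ N₁ N₂ : ℕ, 0 < N₁ → 0 < N₂ →
      ⟪A N₁, A N₂⟫_ℂ = c' + (((min N₁ N₂ : ℕ) : ℂ) / ((N₁ : ℂ) * (N₂ : ℂ))) * X := by
    intro N₁ N₂ h1 h2
    rw [hA]
    rw [inner_smul_left, inner_smul_right, hSS]
    rw [map_inv₀, map_natCast]
    have e1 : (N₁ : ℂ) ≠ 0 := Nat.cast_ne_zero.mpr (by omega)
    have e2 : (N₂ : ℂ) ≠ 0 := Nat.cast_ne_zero.mpr (by omega)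
    field_simp
  -- bounds
  have hc'_norm : ‖c'‖ ≤ ‖w‖ * ‖w‖ := by
    rw [hc']
    calc ‖⟪(ρ (thetaEl β m) : H →L[ℂ] H) w, w⟫_ℂ‖
        ≤ ‖(ρ (thetaEl β m) : H →L[ℂ] H) w‖ * ‖w‖ := norm_inner_le_norm _ _
      _ = ‖w‖ * ‖w‖ := by rw [rho_norm]
  have hX_norm : ‖X‖ ≤ 2 * (‖w‖ * ‖w‖) := by
    rw [hX]
    calc ‖⟪w, w⟫_ℂ - c'‖ ≤ ‖⟪w, w⟫_ℂ‖ + ‖c'‖ := norm_sub_le _ _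
      _ ≤ ‖w‖ * ‖w‖ + ‖w‖ * ‖w‖ := add_le_add (norm_inner_le_norm _ _) hc'_norm
      _ = 2 * (‖w‖ * ‖w‖) := by ring
  set E : ℕ → ℕ → ℂ := fun a b => ((min a b : ℕ) : ℂ) / ((a : ℂ) * (b : ℂ)) with hEdef
  have hEn : ∀ a b : ℕ, 0 < a → 0 < b → ‖E a b‖ ≤ 1 / (a : ℝ) := by
    intro a b ha hb
    rw [hEdef]
    simp only []
    rw [norm_div, norm_mul, Complex.norm_natCast, Complex.norm_natCast, Complex.norm_natCast]
    rw [div_le_div_iff₀ (by positivity) (by positivity)]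
    have hmin : ((min a b : ℕ) : ℝ) ≤ (b : ℝ) := by
      exact_mod_cast Nat.cast_le.mpr (min_le_right a b)
    have ha' : (1:ℝ) ≤ (a : ℝ) := by exact_mod_cast ha
    have hb' : (0:ℝ) < (b : ℝ) := by exact_mod_cast hb
    nlinarith
  -- distance bound
  have hdist : ∀ N₁ N₂ : ℕ, 0 < N₁ → 0 < N₂ →
      ‖A N₁ - A N₂‖ ^ 2 ≤ (2 / (N₁ : ℝ) + 2 / (N₂ : ℝ)) * (2 * (‖w‖ * ‖w‖)) := by
    intro N₁ N₂ h1 h2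
    have expand : ⟪A N₁ - A N₂, A N₁ - A N₂⟫_ℂ =
        (E N₁ N₁ - E N₁ N₂ - E N₂ N₁ + E N₂ N₂) * X := by
      rw [inner_sub_sub_self, hAA N₁ N₁ h1 h1, hAA N₁ N₂ h1 h2, hAA N₂ N₁ h2 h1,
        hAA N₂ N₂ h2 h2]
      ring
    have hre : ‖A N₁ - A N₂‖ ^ 2 = RCLike.re ⟪A N₁ - A N₂, A N₁ - A N₂⟫_ℂ :=
      (inner_self_eq_norm_sq (𝕜 := ℂ) _).symm
    have hsum : ‖E N₁ N₁ - E N₁ N₂ - E N₂ N₁ + E N₂ N₂‖ ≤ 2 / (N₁ : ℝ) + 2 / (N₂ : ℝ) := by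
      calc ‖E N₁ N₁ - E N₁ N₂ - E N₂ N₁ + E N₂ N₂‖
          ≤ ‖E N₁ N₁ - E N₁ N₂ - E N₂ N₁‖ + ‖E N₂ N₂‖ := norm_add_le _ _
        _ ≤ (‖E N₁ N₁ - E N₁ N₂‖ + ‖E N₂ N₁‖) + ‖E N₂ N₂‖ :=
            by linarith [norm_sub_le (E N₁ N₁ - E N₁ N₂) (E N₂ N₁)]
        _ ≤ ((‖E N₁ N₁‖ + ‖E N₁ N₂‖) + ‖E N₂ N₁‖) + ‖E N₂ N₂‖ :=
            by linarith [norm_sub_le (E N₁ N₁) (E N₁ N₂)]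
        _ ≤ ((1 / (N₁ : ℝ) + 1 / (N₁ : ℝ)) + 1 / (N₂ : ℝ)) + 1 / (N₂ : ℝ) :=
            add_le_add (add_le_add (add_le_add (hEn N₁ N₁ h1 h1) (hEn N₁ N₂ h1 h2))
              (hEn N₂ N₁ h2 h1)) (hEn N₂ N₂ h2 h2)
        _ = 2 / (N₁ : ℝ) + 2 / (N₂ : ℝ) := by ring
    rw [hre, expand]
    refine le_trans (RCLike.re_le_norm _) ?_
    rw [norm_mul]
    exact mul_le_mul hsum hX_norm (norm_nonneg _) (by positivity)
  -- Cauchy sequence of averages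
  set C : ℝ := 2 * (‖w‖ * ‖w‖) with hC
  have hCnn : 0 ≤ C := by rw [hC]; positivity
  have hcauchy : CauchySeq (fun N : ℕ => A (N + 1)) := by
    apply cauchySeq_of_le_tendsto_0 (fun K : ℕ => Real.sqrt (4 * C / (K + 1)))
    · intro n mm K hn hm
      rw [dist_eq_norm]
      have hbd := hdist (n+1) (mm+1) (by omega) (by omega)
      have h4 : (2 / ((n:ℝ) + 1) + 2 / ((mm:ℝ) + 1)) * C ≤ 4 * C / (K + 1) := by
        have e1 : (2:ℝ) / ((n:ℝ)+1) ≤ 2 / ((K:ℝ)+1) := by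
          apply div_le_div_of_nonneg_left (by norm_num) (by positivity)
          have : (K:ℝ) ≤ (n:ℝ) := by exact_mod_cast hn
          linarith
        have e2 : (2:ℝ) / ((mm:ℝ)+1) ≤ 2 / ((K:ℝ)+1) := by
          apply div_le_div_of_nonneg_left (by norm_num) (by positivity)
          have : (K:ℝ) ≤ (mm:ℝ) := by exact_mod_cast hm
          linarith
        have e3 : (2:ℝ) / ((n:ℝ)+1) + 2 / ((mm:ℝ)+1) ≤ 4 / ((K:ℝ)+1) := by
          have : (2:ℝ) / ((K:ℝ)+1) + 2 / ((K:ℝ)+1) = 4 / ((K:ℝ)+1) := by ring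
          linarith
        calc (2 / ((n:ℝ) + 1) + 2 / ((mm:ℝ) + 1)) * C ≤ (4 / ((K:ℝ)+1)) * C :=
              mul_le_mul_of_nonneg_right e3 hCnn
          _ = 4 * C / ((K:ℝ) + 1) := by ring
      rw [Real.le_sqrt (norm_nonneg _) (by positivity)]
      have hcast : ((n+1 : ℕ) : ℝ) = (n:ℝ)+1 := by push_cast; ring
      have hcast2 : ((mm+1 : ℕ) : ℝ) = (mm:ℝ)+1 := by push_cast; ring
      rw [hcast, hcast2] at hbd
      exact le_trans hbd h4
    · have h := tendsto_const_div_atTop_nhds_zero_nat (4 * C)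
      have h2 := h.comp (Filter.tendsto_add_atTop_nat 1)
      have h3 : Filter.Tendsto (fun K : ℕ => 4 * C / ((K:ℝ) + 1)) Filter.atTop (nhds 0) := by
        refine h2.congr fun n => ?_
        simp only [Function.comp]
        push_cast
        ring
      have := (Real.continuous_sqrt.tendsto 0).comp h3
      rw [Real.sqrt_zero] at this
      exact this
  obtain ⟨zl, hzl⟩ := cauchySeq_tendsto_of_complete hcauchy
  -- inner with u
  have hcz : ⟪u, zl⟫_ℂ = c := by
    have t1 : Filter.Tendsto (fun N : ℕ => ⟪u, A (N+1)⟫_ℂ) Filter.atTop (nhds ⟪u, zl⟫_ℂ) :=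
      Filter.Tendsto.inner tendsto_const_nhds hzl
    have t2 : ∀ N : ℕ, ⟪u, A (N+1)⟫_ℂ = c := by
      intro N
      rw [hA]
      simp only []
      rw [inner_smul_right, inner_sum]
      have : ∑ n ∈ Finset.range (N+1), ⟪u, z n⟫_ℂ = ((N+1 : ℕ) : ℂ) * c := by
        rw [Finset.sum_congr rfl fun n _ => hz_inner_u n, Finset.sum_const,
          Finset.card_range, nsmul_eq_mul]
      rw [this]
      have hne : ((N+1 : ℕ) : ℂ) ≠ 0 := Nat.cast_ne_zero.mpr (by omega)
      push_cast at hne ⊢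
      field_simp
    rw [Filter.tendsto_congr t2] at t1
    exact tendsto_nhds_unique t1 tendsto_const_nhds
  -- zl is in fixedSet ρ β
  have hzfix : zl ∈ fixedSet ρ β := by
    intro g hg
    obtain ⟨b, hb⟩ := Set.Finite.bddAbove g.2
    have hgsupp : ∀ x : ℕ, b + 1 ≤ x → (g : Equiv.Perm ℕ) x = x := by
      intro x hx
      by_contra hcon
      have hxmem : x ∈ {x : ℕ | (g : Equiv.Perm ℕ) x ≠ x} := hcon
      have := hb hxmem
      omega
    have hfixn : ∀ n : ℕ, b + 1 ≤ n → (ρ g : H →L[ℂ] H) (z n) = z n := by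
      intro n hn
      set τ : SInf := thetaEl β (jn n) * g * thetaEl β (jn n) with hτ
      have hτfix : InSInf δ τ := by
        intro x hx
        have happ : (τ : Equiv.Perm ℕ) x
            = thetaFun β (jn n) ((g : Equiv.Perm ℕ) (thetaFun β (jn n) x)) := rfl
        rw [happ]
        by_cases hxβ : x < β
        · have e1 : thetaFun β (jn n) x = x := by unfold thetaFun; split_ifs <;> omega
          rw [e1, hg x hxβ, e1]
        · push_neg at hxβ
          have hjnn := hjn_ge n
          have hjngt := hjn_gt n
          have e1 : thetaFun β (jn n) x = x + jn n := by
            unfold thetaFun; split_ifs <;> omega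
          rw [e1]
          have e2 : (g : Equiv.Perm ℕ) (x + jn n) = x + jn n := by
            apply hgsupp
            omega
          rw [e2]
          unfold thetaFun; split_ifs <;> omega
      have hmul : g * thetaEl β (jn n) = thetaEl β (jn n) * τ := by
        rw [hτ]
        have : thetaEl β (jn n) * (thetaEl β (jn n) * g * thetaEl β (jn n))
            = (thetaEl β (jn n) * thetaEl β (jn n)) * (g * thetaEl β (jn n)) := by group
        rw [this, theta_mul_self, one_mul]
      rw [hz]
      simp only []
      rw [← rho_mul_apply, hmul, rho_mul_apply, hw τ hτfix]
    -- pass to the limit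
    have t1 : Filter.Tendsto (fun N : ℕ => (ρ g : H →L[ℂ] H) (A (N+1))) Filter.atTop
        (nhds ((ρ g : H →L[ℂ] H) zl)) :=
      ((ρ g : H →L[ℂ] H).continuous.tendsto zl).comp hzl
    have hdiff : ∀ N : ℕ, ‖(ρ g : H →L[ℂ] H) (A (N+1)) - A (N+1)‖
        ≤ ((b+1 : ℕ) : ℝ) * (2 * ‖w‖) / ((N+1 : ℕ) : ℝ) := by
      intro N
      have hterm : ∀ n : ℕ, ‖(ρ g : H →L[ℂ] H) (z n) - z n‖
          ≤ (if n < b + 1 then 2 * ‖w‖ else 0) := by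
        intro n
        by_cases hn : n < b + 1
        · rw [if_pos hn]
          have e1 : ‖z n‖ = ‖w‖ := by rw [hz]; exact rho_norm ρ _ _
          calc ‖(ρ g : H →L[ℂ] H) (z n) - z n‖
              ≤ ‖(ρ g : H →L[ℂ] H) (z n)‖ + ‖z n‖ := norm_sub_le _ _
            _ = 2 * ‖w‖ := by rw [rho_norm, e1]; ring
        · rw [if_neg hn, hfixn n (by omega), sub_self, norm_zero]
      have hsumbd : ‖∑ n ∈ Finset.range (N+1), ((ρ g : H →L[ℂ] H) (z n) - z n)‖
          ≤ ((b+1 : ℕ) : ℝ) * (2 * ‖w‖) := by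
        calc ‖∑ n ∈ Finset.range (N+1), ((ρ g : H →L[ℂ] H) (z n) - z n)‖
            ≤ ∑ n ∈ Finset.range (N+1), ‖(ρ g : H →L[ℂ] H) (z n) - z n‖ :=
              norm_sum_le _ _
          _ ≤ ∑ n ∈ Finset.range (N+1), (if n < b + 1 then 2 * ‖w‖ else 0) :=
              Finset.sum_le_sum fun n _ => hterm n
          _ = ((min (N+1) (b+1) : ℕ) : ℝ) * (2 * ‖w‖) := by
              rw [← Finset.sum_filter]
              have : (Finset.range (N+1)).filter (fun n => n < b+1)
                  = Finset.range (min (N+1) (b+1)) := by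
                ext n
                simp only [Finset.mem_filter, Finset.mem_range, Nat.lt_min]
              rw [this, Finset.sum_const, Finset.card_range, nsmul_eq_mul]
          _ ≤ ((b+1 : ℕ) : ℝ) * (2 * ‖w‖) := by
              have : ((min (N+1) (b+1) : ℕ) : ℝ) ≤ ((b+1 : ℕ) : ℝ) := by
                exact_mod_cast min_le_right (N+1) (b+1)
              have h2w : (0:ℝ) ≤ 2 * ‖w‖ := by positivity
              exact mul_le_mul_of_nonneg_right this h2w
      have e1 : (ρ g : H →L[ℂ] H) (A (N+1)) - A (N+1)
          = (((N+1 : ℕ) : ℂ))⁻¹ • ∑ n ∈ Finset.range (N+1),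
              ((ρ g : H →L[ℂ] H) (z n) - z n) := by
        rw [hA]
        simp only []
        rw [map_smul, map_sum, ← smul_sub, ← Finset.sum_sub_distrib]
      rw [e1, norm_smul, norm_inv, Complex.norm_natCast]
      rw [inv_mul_eq_div, div_le_div_iff₀ (by positivity) (by positivity)]
      calc ‖∑ n ∈ Finset.range (N+1), ((ρ g : H →L[ℂ] H) (z n) - z n)‖ * ((N+1:ℕ) : ℝ)
          ≤ (((b+1 : ℕ) : ℝ) * (2 * ‖w‖)) * ((N+1:ℕ) : ℝ) := by
            apply mul_le_mul_of_nonneg_right hsumbd (by positivity)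
        _ = ((b+1 : ℕ) : ℝ) * (2 * ‖w‖) * ((N+1:ℕ) : ℝ) := by ring
    have htends : Filter.Tendsto
        (fun N : ℕ => ((b+1 : ℕ) : ℝ) * (2 * ‖w‖) / ((N+1 : ℕ) : ℝ))
        Filter.atTop (nhds 0) := by
      have h := tendsto_const_div_atTop_nhds_zero_nat (((b+1 : ℕ) : ℝ) * (2 * ‖w‖))
      have h2 := h.comp (Filter.tendsto_add_atTop_nat 1)
      refine h2.congr fun n => ?_
      simp only [Function.comp]
    have hdt : Filter.Tendsto
        (fun N : ℕ => (ρ g : H →L[ℂ] H) (A (N+1)) - A (N+1)) Filter.atTop (nhds 0) := by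
      rw [tendsto_zero_iff_norm_tendsto_zero]
      exact squeeze_zero (fun _ => norm_nonneg _) hdiff htends
    have t3 : Filter.Tendsto (fun N : ℕ => (ρ g : H →L[ℂ] H) (A (N+1)))
        Filter.atTop (nhds zl) := by
      have t4 := hzl.add hdt
      rw [add_zero] at t4
      exact t4.congr fun N => by abel
    exact tendsto_nhds_unique t1 t3
  -- conclusion
  have hc0 : c = 0 := by rw [← hcz]; exact huo zl hzfix
  intro j hj
  calc ⟪(ρ (thetaEl β j) : H →L[ℂ] H) u, w⟫_ℂ
      = ⟪(ρ (thetaEl β m) : H →L[ℂ] H) u, w⟫_ℂ :=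
        constF ρ β δ hβδ u w hu hw j m hj le_rfl
    _ = 0 := hc0

end Core

theorem theta_tendsto_projection' {H : Type*} [NormedAddCommGroup H]
    [InnerProductSpace ℂ H] [CompleteSpace H]
    (ρ : SInf →* unitary (H →L[ℂ] H))
    (hdense : Dense (⋃ α : ℕ, fixedSet ρ α))
    (β : ℕ) (P : H →L[ℂ] H) (hP : IsProjOntoFixed ρ β P) (v w : H) :
    Filter.Tendsto (fun j : ℕ => ⟪(ρ (thetaEl β j) : H →L[ℂ] H) v, w⟫_ℂ)
      Filter.atTop (nhds ⟪P v, w⟫_ℂ) := by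
  set u : H := v - P v with hu
  have hPv : P v ∈ fixedSet ρ β := (hP v).1
  have huorth : ∀ y ∈ fixedSet ρ β, ⟪u, y⟫_ℂ = 0 := (hP v).2
  have hsplit : ∀ j : ℕ, ⟪(ρ (thetaEl β j) : H →L[ℂ] H) v, w⟫_ℂ
      = ⟪P v, w⟫_ℂ + ⟪(ρ (thetaEl β j) : H →L[ℂ] H) u, w⟫_ℂ := by
    intro j
    have e1 : (ρ (thetaEl β j) : H →L[ℂ] H) (P v) = P v := hPv _ (InSInf_theta β j)
    have e2 : v = P v + u := by rw [hu]; abel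
    conv_lhs => rw [e2]
    rw [map_add, e1, inner_add_left]
  have main : Filter.Tendsto (fun j : ℕ => ⟪(ρ (thetaEl β j) : H →L[ℂ] H) u, w⟫_ℂ)
      Filter.atTop (nhds 0) := by
    rw [Metric.tendsto_atTop]
    intro ε hε
    set C : ℝ := (1 + ‖P‖) * (‖w‖ + 1) + ‖u‖ + 1 with hCdef
    have hC1 : (1:ℝ) ≤ C := by
      have := norm_nonneg P
      have := norm_nonneg w
      have := norm_nonneg u
      nlinarith
    have hCpos : (0:ℝ) < C := by linarith
    set η : ℝ := min 1 (ε / (2 * C)) with hη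
    have hηpos : 0 < η := by
      apply lt_min one_pos
      positivity
    have hη1 : η ≤ 1 := min_le_left _ _
    have hηε : η * C ≤ ε / 2 := by
      have h1 : η ≤ ε / (2 * C) := min_le_right _ _
      calc η * C ≤ (ε / (2 * C)) * C := mul_le_mul_of_nonneg_right h1 (le_of_lt hCpos)
        _ = ε / 2 := by field_simp
    obtain ⟨v₀, hv₀mem, hv₀d⟩ := hdense.exists_dist_lt v hηpos
    obtain ⟨w₀, hw₀mem, hw₀d⟩ := hdense.exists_dist_lt w hηpos
    obtain ⟨sα, hsα⟩ := Set.mem_iUnion.mp hv₀mem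
    obtain ⟨sγ, hsγ⟩ := Set.mem_iUnion.mp hw₀mem
    set δ : ℕ := max (max sα sγ) β with hδ
    have hβδ : β ≤ δ := le_max_right _ _
    have hv₀δ : v₀ ∈ fixedSet ρ δ :=
      fixedSet_mono ρ (le_trans (le_max_left sα sγ) (le_max_left _ _)) hsα
    have hw₀δ : w₀ ∈ fixedSet ρ δ :=
      fixedSet_mono ρ (le_trans (le_max_right sα sγ) (le_max_left _ _)) hsγ
    have hPv₀δ : P v₀ ∈ fixedSet ρ δ := fixedSet_mono ρ hβδ (hP v₀).1
    set u₀ : H := v₀ - P v₀ with hu₀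
    have hu₀δ : u₀ ∈ fixedSet ρ δ := fixedSet_sub ρ hv₀δ hPv₀δ
    have hu₀orth : ∀ y ∈ fixedSet ρ β, ⟪u₀, y⟫_ℂ = 0 := (hP v₀).2
    have hcore := core_lemma ρ β δ hβδ u₀ w₀ hu₀δ hu₀orth hw₀δ
    refine ⟨δ - β, fun j hj => ?_⟩
    rw [dist_zero_right]
    -- norm estimates
    have hvv : ‖v - v₀‖ < η := by rw [← dist_eq_norm]; exact hv₀d
    have hww : ‖w - w₀‖ < η := by rw [← dist_eq_norm]; exact hw₀d
    have huu : ‖u - u₀‖ ≤ (1 + ‖P‖) * η := by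
      have e1 : u - u₀ = (v - v₀) - P (v - v₀) := by
        rw [hu, hu₀, map_sub]; abel
      rw [e1]
      calc ‖(v - v₀) - P (v - v₀)‖ ≤ ‖v - v₀‖ + ‖P (v - v₀)‖ := norm_sub_le _ _
        _ ≤ ‖v - v₀‖ + ‖P‖ * ‖v - v₀‖ := by
            have := P.le_opNorm (v - v₀)
            linarith
        _ = (1 + ‖P‖) * ‖v - v₀‖ := by ring
        _ ≤ (1 + ‖P‖) * η := by
            have h0 : (0:ℝ) ≤ 1 + ‖P‖ := by positivity
            exact mul_le_mul_of_nonneg_left (le_of_lt hvv) h0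
    have hu₀n : ‖u₀‖ ≤ ‖u‖ + (1 + ‖P‖) * η := by
      calc ‖u₀‖ = ‖u - (u - u₀)‖ := by congr 1; abel
        _ ≤ ‖u‖ + ‖u - u₀‖ := norm_sub_le _ _
        _ ≤ ‖u‖ + (1 + ‖P‖) * η := by linarith
    have hzero : ⟪(ρ (thetaEl β j) : H →L[ℂ] H) u₀, w₀⟫_ℂ = 0 := hcore j hj
    have hdecomp : ⟪(ρ (thetaEl β j) : H →L[ℂ] H) u, w⟫_ℂ
        = ⟪(ρ (thetaEl β j) : H →L[ℂ] H) (u - u₀), w⟫_ℂ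
          + ⟪(ρ (thetaEl β j) : H →L[ℂ] H) u₀, w - w₀⟫_ℂ := by
      have e3 : ⟪(ρ (thetaEl β j) : H →L[ℂ] H) u₀, w - w₀⟫_ℂ
          = ⟪(ρ (thetaEl β j) : H →L[ℂ] H) u₀, w⟫_ℂ := by
        rw [inner_sub_right, hzero, sub_zero]
      have e4 : ⟪(ρ (thetaEl β j) : H →L[ℂ] H) (u - u₀), w⟫_ℂ
          + ⟪(ρ (thetaEl β j) : H →L[ℂ] H) u₀, w⟫_ℂ
          = ⟪(ρ (thetaEl β j) : H →L[ℂ] H) u, w⟫_ℂ := by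
        rw [← inner_add_left, ← map_add, show u - u₀ + u₀ = u from by abel]
      rw [← e4, e3]
    rw [hdecomp]
    have hb1 : ‖⟪(ρ (thetaEl β j) : H →L[ℂ] H) (u - u₀), w⟫_ℂ‖ ≤ ((1 + ‖P‖) * η) * ‖w‖ := by
      calc ‖⟪(ρ (thetaEl β j) : H →L[ℂ] H) (u - u₀), w⟫_ℂ‖
          ≤ ‖(ρ (thetaEl β j) : H →L[ℂ] H) (u - u₀)‖ * ‖w‖ := norm_inner_le_norm _ _
        _ = ‖u - u₀‖ * ‖w‖ := by rw [rho_norm]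
        _ ≤ ((1 + ‖P‖) * η) * ‖w‖ := mul_le_mul_of_nonneg_right huu (norm_nonneg _)
    have hb2 : ‖⟪(ρ (thetaEl β j) : H →L[ℂ] H) u₀, w - w₀⟫_ℂ‖
        ≤ (‖u‖ + (1 + ‖P‖) * η) * η := by
      calc ‖⟪(ρ (thetaEl β j) : H →L[ℂ] H) u₀, w - w₀⟫_ℂ‖
          ≤ ‖(ρ (thetaEl β j) : H →L[ℂ] H) u₀‖ * ‖w - w₀‖ := norm_inner_le_norm _ _
        _ = ‖u₀‖ * ‖w - w₀‖ := by rw [rho_norm]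
        _ ≤ (‖u‖ + (1 + ‖P‖) * η) * η := by
            apply mul_le_mul hu₀n (le_of_lt hww) (norm_nonneg _)
            have := norm_nonneg u
            positivity
    calc ‖⟪(ρ (thetaEl β j) : H →L[ℂ] H) (u - u₀), w⟫_ℂ
          + ⟪(ρ (thetaEl β j) : H →L[ℂ] H) u₀, w - w₀⟫_ℂ‖
        ≤ ‖⟪(ρ (thetaEl β j) : H →L[ℂ] H) (u - u₀), w⟫_ℂ‖
          + ‖⟪(ρ (thetaEl β j) : H →L[ℂ] H) u₀, w - w₀⟫_ℂ‖ := norm_add_le _ _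
      _ ≤ ((1 + ‖P‖) * η) * ‖w‖ + (‖u‖ + (1 + ‖P‖) * η) * η := add_le_add hb1 hb2
      _ ≤ η * C := by
          rw [hCdef]
          have hPn := norm_nonneg P
          have hwn := norm_nonneg w
          have hun := norm_nonneg u
          nlinarith [mul_nonneg (mul_nonneg (by positivity : (0:ℝ) ≤ 1 + ‖P‖) hηpos.le)
            (sub_nonneg.mpr hη1)]
      _ ≤ ε / 2 := hηε
      _ < ε := by linarith
  have := (tendsto_const_nhds (x := ⟪P v, w⟫_ℂ) (f := Filter.atTop (α := ℕ))).add main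
  rw [add_zero] at this
  exact (Filter.tendsto_congr fun j => (hsplit j).symm).mp this

/-- **Weak convergence to the projection** (Theorem 2.2(b)): for a unitary
representation of `S∞` with `⋃_α H[α]` dense, the operators `ρ(θ_j[β])` converge weakly
to the orthogonal projection `P[β]` onto `H[β]`. -/
theorem theta_tendsto_projection {H : Type*} [NormedAddCommGroup H]
    [InnerProductSpace ℂ H] [CompleteSpace H]
    (ρ : SInf →* unitary (H →L[ℂ] H))
    (hdense : Dense (⋃ α : ℕ, fixedSet ρ α))
    (β : ℕ) (P : H →L[ℂ] H) (hP : IsProjOntoFixed ρ β P) (v w : H) :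
    Filter.Tendsto (fun j : ℕ => ⟪(ρ (thetaEl β j) : H →L[ℂ] H) v, w⟫_ℂ)
      Filter.atTop (nhds ⟪P v, w⟫_ℂ) := by
  exact theta_tendsto_projection' ρ hdense β P hP v w
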